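/- Let A = (Q, Σ, ·, i, F) be a minimal DFA and k ≥ 0. If there exist words w1 and w2 with w1 ∼_k w2 and i·w1 ≠ i·w2, then there exist words w and w' such that w ∼_k w', w' is obtained from w by inserting a single letter at some position, and i·w ≠ i·w'. -/

import Mathlib

/-- `subk k w` is the set of scattered subwords of `w` of length at most `k`. -/
def subk {α : Type*} (k : ℕ) (w : List α) : Set (List α) :=
  {u | u.length ≤ k ∧ u.Sublist w}

/-- Two words are `k`-equivalent if they have the same subwords of length at most `k`. -/
def kEquiv {α : Type*} (k : ℕ) (u v : List α) : Prop :=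
  subk k u = subk k v

/-- A language is `k`-piecewise testable (Simon's characterization):
`k`-equivalent words are equi-members. -/
def IsPT {α : Type*} (k : ℕ) (L : Language α) : Prop :=
  ∀ u v : List α, kEquiv k u v → (u ∈ L ↔ v ∈ L)

/-- A DFA is minimal if all states are reachable and pairwise distinguishable. -/
def IsMinimalDFA {α σ : Type*} (A : DFA α σ) : Prop :=
  (∀ q : σ, ∃ w : List α, A.eval w = q) ∧
  ∀ p q : σ,
    (∀ w : List α, (A.evalFrom p w ∈ A.accept ↔ A.evalFrom q w ∈ A.accept)) → p = q

/-- There is a simple path (pairwise distinct states) with `m` transitions in the DFA `A`. -/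
def DFAHasSimplePath {α σ : Type*} (A : DFA α σ) (m : ℕ) : Prop :=
  ∃ (qs : Fin (m + 1) → σ) (as : Fin m → α),
    Function.Injective qs ∧ ∀ i : Fin m, A.step (qs i.castSucc) (as i) = qs i.succ

/-- The depth of a DFA: the number of transitions on a longest simple path. -/
noncomputable def dfaDepth {α σ : Type*} (A : DFA α σ) : ℕ :=
  sSup {m | DFAHasSimplePath A m}

/-- There is a simple path (pairwise distinct states) with `m` transitions in the NFA `A`. -/
def NFAHasSimplePath {α σ : Type*} (A : NFA α σ) (m : ℕ) : Prop :=
  ∃ (qs : Fin (m + 1) → σ) (as : Fin m → α),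
    Function.Injective qs ∧ ∀ i : Fin m, qs i.succ ∈ A.step (qs i.castSucc) (as i)

/-- The depth of an NFA: the number of transitions on a longest simple path. -/
noncomputable def nfaDepth {α σ : Type*} (A : NFA α σ) : ℕ :=
  sSup {m | NFAHasSimplePath A m}

open List

section SimonAux

variable {α : Type*}

lemma kEquiv_symm {k : ℕ} {u v : List α} (h : kEquiv k u v) : kEquiv k v u := Eq.symm h

lemma kEquiv_trans {k : ℕ} {u v w : List α} (h1 : kEquiv k u v) (h2 : kEquiv k v w) :
    kEquiv k u w := Eq.trans h1 h2

lemma subk_mono {k : ℕ} {u v : List α} (h : u <+ v) : subk k u ⊆ subk k v :=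
  fun _ hs => ⟨hs.1, hs.2.trans h⟩

lemma kEquiv_sub {k : ℕ} {X Y m : List α} (h : kEquiv k X Y) (hm : m.length ≤ k)
    (hs : m <+ X) : m <+ Y := by
  have hmem : m ∈ subk k X := ⟨hm, hs⟩
  rw [kEquiv] at h
  rw [h] at hmem
  exact hmem.2

lemma sandwich {k : ℕ} {u z w : List α} (h : kEquiv k u w) (h1 : u <+ z) (h2 : z <+ w) :
    kEquiv k u z := by
  have h' : subk k u = subk k w := h
  show subk k u = subk k z
  refine Set.Subset.antisymm (subk_mono h1) ?_
  intro s hs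
  have hsw := subk_mono h2 hs
  rwa [← h'] at hsw

lemma cons_sublist_of_ne {a d : α} {l m : List α} (h : a :: l <+ d :: m) (hne : a ≠ d) :
    a :: l <+ m := by
  cases h with
  | cons _ h => exact h
  | cons_cons => exact absurd rfl hne

lemma sublist_cons_cases {t y : List α} {a : α} (h : t <+ a :: y) :
    t <+ y ∨ ∃ t₁, t = a :: t₁ ∧ t₁ <+ y := by
  cases h with
  | cons _ h => exact Or.inl h
  | cons_cons _ h => exact Or.inr ⟨_, rfl, h⟩

/-- Greedy decomposition: matching `s` into `z ++ y`, a canonical prefix of `s`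
is absorbed by `z` and a remainder `r` must embed into `y`. -/
lemma greedy (z : List α) : ∀ s : List α, ∃ p r : List α, s = p ++ r ∧ p <+ z ∧
    (∀ y, (s <+ z ++ y ↔ r <+ y)) ∧ ∀ c t, r = c :: t → ¬ (p ++ [c]) <+ z := by
  classical
  induction z with
  | nil =>
    intro s
    refine ⟨[], s, rfl, List.nil_sublist _, fun y => by simp, ?_⟩
    rintro c t rfl h
    simpa using h.length_le
  | cons d z' ih =>
    intro s
    cases s with
    | nil =>
      exact ⟨[], [], rfl, List.nil_sublist _, fun y => by simp, fun c t h => nomatch h⟩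
    | cons c s' =>
      by_cases hc : c = d
      · subst hc
        obtain ⟨p', r', hsplit, hp, hiff, hblock⟩ := ih s'
        refine ⟨c :: p', r', by rw [List.cons_append, hsplit], hp.cons₂ c, ?_, ?_⟩
        · intro y
          rw [List.cons_append, List.cons_sublist_cons]
          exact hiff y
        · rintro c₀ t rfl
          rw [List.cons_append, List.cons_sublist_cons]
          exact hblock c₀ t rfl
      · obtain ⟨p', r', hsplit, hp, hiff, hblock⟩ := ih (c :: s')
        refine ⟨p', r', hsplit, hp.cons d, ?_, ?_⟩
        · intro y
          constructor
          · intro h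
            have h' : c :: s' <+ d :: (z' ++ y) := by rwa [List.cons_append] at h
            exact (hiff y).mp (cons_sublist_of_ne h' hc)
          · intro h
            have := (hiff y).mpr h
            rw [List.cons_append]
            exact this.cons d
        · rintro c₀ t rfl
          intro hbad
          cases p' with
          | nil =>
            have hc₀ : c₀ = c := by
              have := hsplit
              simp only [List.nil_append] at this
              exact (List.cons.injEq _ _ _ _ ▸ this).1.symm
            have : [c₀] <+ z' := by
              have hb' : c₀ :: ([] : List α) <+ d :: z' := by simpa using hbad
              exact cons_sublist_of_ne hb' (by rw [hc₀]; exact hc)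
            exact hblock c₀ t rfl (by simpa using this)
          | cons e p₁ =>
            have he : e = c := by
              have := hsplit
              simp only [List.cons_append] at this
              exact (List.cons.injEq _ _ _ _ ▸ this).1.symm
            have hb' : e :: (p₁ ++ [c₀]) <+ d :: z' := by simpa using hbad
            have : e :: (p₁ ++ [c₀]) <+ z' :=
              cons_sublist_of_ne hb' (by rw [he]; exact hc)
            exact hblock c₀ t rfl (by simpa using this)

/-- If `p` embeds in `z` but `p ++ [c]` does not, then an embedding of `p ++ c :: x`
into `z ++ y` must place `c :: x` inside `y`. -/
lemma split_lemma {p z y x : List α} {c : α} (hp : p <+ z) (hb : ¬ (p ++ [c]) <+ z)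
    (h : p ++ c :: x <+ z ++ y) : c :: x <+ y := by
  obtain ⟨p₀, r₀, hsplit, hp₀, hiff, _⟩ := greedy z (p ++ c :: x)
  have hr : r₀ <+ y := (hiff y).mp h
  rcases List.append_eq_append_iff.mp hsplit with ⟨w, hw1, hw2⟩ | ⟨w, hw1, hw2⟩
  · cases w with
    | nil =>
      simp only [List.nil_append] at hw2
      rwa [hw2]
    | cons e w' =>
      exfalso
      have he : e = c := by
        simp only [List.cons_append] at hw2
        exact ((List.cons.injEq _ _ _ _).mp hw2).1.symm
      apply hb
      have h1 : p ++ [c] <+ p₀ := by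
        rw [hw1, he]
        exact ((List.nil_sublist w').cons₂ c).append_left p
      exact h1.trans hp₀
  · have h1 : c :: x <+ r₀ := by
      rw [hw2]
      exact List.sublist_append_right w (c :: x)
    exact h1.trans hr

/-- The exchange property: with a blocker `p` for letter `c` in `z`, short words
`c :: x` transfer between the suffixes of two `k`-equivalent words. -/
lemma star {k : ℕ} {z y y' p : List α} {c : α} (hp : p <+ z) (hb : ¬ (p ++ [c]) <+ z)
    (h : kEquiv k (z ++ c :: y) (z ++ y')) :
    ∀ x : List α, p.length + x.length + 1 ≤ k → (x <+ y ↔ c :: x <+ y') := by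
  intro x hlen
  have hxlen : (p ++ c :: x).length ≤ k := by
    simp only [List.length_append, List.length_cons]
    omega
  constructor
  · intro hx
    have h1 : p ++ c :: x <+ z ++ c :: y := hp.append (hx.cons₂ c)
    exact split_lemma hp hb (kEquiv_sub h hxlen h1)
  · intro hx
    have h1 : p ++ c :: x <+ z ++ y' := hp.append hx
    have h2 := kEquiv_sub (kEquiv_symm h) hxlen h1
    exact List.cons_sublist_cons.mp (split_lemma hp hb h2)

/-- Failure-witness extraction: if inserting `c` after `z` into `z ++ w` leaves the
`kEquiv` class, there is a blocked witness. -/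
lemma extract {k : ℕ} {z w : List α} {c : α}
    (hfail : ¬ kEquiv k (z ++ c :: w) (z ++ w)) :
    ∃ p t, p <+ z ∧ ¬ (p ++ [c]) <+ z ∧ t <+ w ∧ ¬ (c :: t) <+ w ∧
      p.length + t.length + 1 ≤ k := by
  have hsub : subk k (z ++ w) ⊆ subk k (z ++ c :: w) :=
    subk_mono ((List.sublist_cons_self c w).append_left z)
  have hex : ∃ s, s ∈ subk k (z ++ c :: w) ∧ s ∉ subk k (z ++ w) := by
    by_contra hno
    push_neg at hno
    exact hfail (Set.Subset.antisymm (fun s hs => hno s hs) hsub)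
  obtain ⟨s, ⟨hslen, hssub⟩, hsnot⟩ := hex
  obtain ⟨p, r, hsplit, hp, hiff, hblock⟩ := greedy z s
  have hrin : r <+ c :: w := (hiff _).mp hssub
  have hrnot : ¬ r <+ w := fun hr => hsnot ⟨hslen, (hiff _).mpr hr⟩
  cases r with
  | nil => exact absurd (List.nil_sublist _) hrnot
  | cons c₀ t =>
    have hc₀ : c₀ = c := by
      by_contra hne
      exact hrnot (cons_sublist_of_ne hrin hne)
    subst hc₀
    refine ⟨p, t, hp, hblock c₀ t rfl, List.cons_sublist_cons.mp hrin, hrnot, ?_⟩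
    rw [hsplit] at hslen
    simp only [List.length_append, List.length_cons] at hslen
    omega

/-- Simon's key exchange lemma: if `z ++ a :: y₁ ∼ₖ z ++ b :: y₂` with `a ≠ b`, then
one can insert `b` after `z` on the left, or `a` after `z` on the right, staying
in the class. -/
lemma key {k : ℕ} {z y₁ y₂ : List α} {a b : α} (hab : a ≠ b)
    (h : kEquiv k (z ++ a :: y₁) (z ++ b :: y₂)) :
    kEquiv k (z ++ b :: a :: y₁) (z ++ a :: y₁) ∨
    kEquiv k (z ++ a :: b :: y₂) (z ++ b :: y₂) := by
  by_contra hcon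
  push_neg at hcon
  obtain ⟨h1, h2⟩ := hcon
  obtain ⟨p, t, hp, hpb, ht, hbt, hL1⟩ := extract h1
  obtain ⟨p', t', hp', hpa, ht', hat, hL2⟩ := extract h2
  -- star1 : x <+ y₂ ↔ b :: x <+ a :: y₁, for p.length + x.length + 1 ≤ k
  have star1 := star (y := y₂) (y' := a :: y₁) hp hpb (kEquiv_symm h)
  -- star2 : x <+ y₁ ↔ a :: x <+ b :: y₂, for p'.length + x.length + 1 ≤ k
  have star2 := star (y := y₁) (y' := b :: y₂) hp' hpa h
  rcases le_total p'.length p.length with hpp | hpp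
  · -- kill t
    have htny2 : ¬ t <+ y₂ := fun htx => hbt ((star1 t hL1).mp htx)
    rcases sublist_cons_cases ht with hty1 | ⟨t₁, heq, ht₁⟩
    · have h3 : a :: t <+ b :: y₂ := (star2 t (by omega)).mp hty1
      have h4 : a :: t <+ y₂ := cons_sublist_of_ne h3 hab
      exact htny2 ((List.sublist_cons_self a t).trans h4)
    · have hlt : t.length = t₁.length + 1 := by rw [heq]; simp
      have h3 : a :: t₁ <+ b :: y₂ := (star2 t₁ (by omega)).mp ht₁
      have h4 : a :: t₁ <+ y₂ := cons_sublist_of_ne h3 hab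
      rw [← heq] at h4
      exact htny2 h4
  · -- kill t'
    have hnty1 : ¬ t' <+ y₁ := fun htx => hat ((star2 t' hL2).mp htx)
    rcases sublist_cons_cases ht' with hty2 | ⟨t₁, heq, ht₁⟩
    · have h3 : b :: t' <+ a :: y₁ := (star1 t' (by omega)).mp hty2
      have h4 : b :: t' <+ y₁ := cons_sublist_of_ne h3 (Ne.symm hab)
      exact hnty1 ((List.sublist_cons_self b t').trans h4)
    · have hlt : t'.length = t₁.length + 1 := by rw [heq]; simp
      have h3 : b :: t₁ <+ a :: y₁ := (star1 t₁ (by omega)).mp ht₁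
      have h4 : b :: t₁ <+ y₁ := cons_sublist_of_ne h3 (Ne.symm hab)
      rw [← heq] at h4
      exact hnty1 h4

/-- Directedness of Simon's congruence classes (with a context `z`). -/
lemma dir {k : ℕ} : ∀ (n : ℕ) (z u v : List α), u.length + v.length ≤ n →
    kEquiv k (z ++ u) (z ++ v) → ∃ w, u <+ w ∧ v <+ w ∧ kEquiv k (z ++ w) (z ++ u) := by
  intro n
  induction n with
  | zero =>
    intro z u v hlen h
    have hu : u = [] := List.length_eq_zero_iff.mp (by omega)
    have hv : v = [] := List.length_eq_zero_iff.mp (by omega)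
    subst hu; subst hv
    exact ⟨[], List.Sublist.refl _, List.Sublist.refl _, rfl⟩
  | succ n ih =>
    intro z u v hlen h
    cases u with
    | nil => exact ⟨v, List.nil_sublist v, List.Sublist.refl v, kEquiv_symm h⟩
    | cons a u₁ =>
      cases v with
      | nil => exact ⟨a :: u₁, List.Sublist.refl _, List.nil_sublist _, rfl⟩
      | cons b v₁ =>
        by_cases hab : a = b
        · subst hab
          have h' : kEquiv k ((z ++ [a]) ++ u₁) ((z ++ [a]) ++ v₁) := by
            simpa [List.append_assoc] using h
          obtain ⟨w₁, hw1, hw2, hw⟩ := ih (z ++ [a]) u₁ v₁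
            (by simp only [List.length_cons] at hlen; omega) h'
          refine ⟨a :: w₁, hw1.cons₂ a, hw2.cons₂ a, ?_⟩
          simpa [List.append_assoc] using hw
        · rcases key hab h with h1 | h2
          · -- h1 : kEquiv (z ++ b :: a :: u₁) (z ++ a :: u₁)
            have h'' : kEquiv k ((z ++ [b]) ++ (a :: u₁)) ((z ++ [b]) ++ v₁) := by
              have := kEquiv_trans h1 h
              simpa [List.append_assoc] using this
            obtain ⟨w₁, hwa, hwb, hw⟩ := ih (z ++ [b]) (a :: u₁) v₁
              (by simp only [List.length_cons] at hlen ⊢; omega) h''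
            refine ⟨b :: w₁, hwa.cons b, hwb.cons₂ b, ?_⟩
            have hw' : kEquiv k (z ++ b :: w₁) (z ++ b :: a :: u₁) := by
              simpa [List.append_assoc] using hw
            exact kEquiv_trans hw' h1
          · -- h2 : kEquiv (z ++ a :: b :: v₁) (z ++ b :: v₁)
            have h'' : kEquiv k ((z ++ [a]) ++ u₁) ((z ++ [a]) ++ (b :: v₁)) := by
              have := kEquiv_trans h (kEquiv_symm h2)
              simpa [List.append_assoc] using this
            obtain ⟨w₁, hwa, hwb, hw⟩ := ih (z ++ [a]) u₁ (b :: v₁)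
              (by simp only [List.length_cons] at hlen ⊢; omega) h''
            refine ⟨a :: w₁, hwa.cons₂ a, hwb.cons a, ?_⟩
            simpa [List.append_assoc] using hw

/-- One-step insertion towards a supersequence. -/
lemma ins {u w : List α} (h : u <+ w) : u ≠ w →
    ∃ x y c, u = x ++ y ∧ (x ++ c :: y) <+ w := by
  induction h with
  | slnil => exact fun hne => absurd rfl hne
  | cons a h ih => exact fun _ => ⟨[], _, a, rfl, h.cons₂ a⟩
  | @cons_cons l₁ l₂ a h ih =>
    intro hne
    have hne' : l₁ ≠ l₂ := fun he => hne (by rw [he])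
    obtain ⟨x, y, c, e1, e2⟩ := ih hne'
    exact ⟨a :: x, y, c, by rw [e1]; rfl, by simpa using e2.cons₂ a⟩

/-- Walking up from `u` to a supersequence `w` in the same class, some single
insertion changes the value of `f`. -/
lemma chain {k : ℕ} {β : Type*} (f : List α → β) :
    ∀ (n : ℕ) (u w : List α), w.length - u.length ≤ n → u <+ w → kEquiv k u w →
      f u ≠ f w →
      ∃ w₀ w₀', kEquiv k w₀ w₀' ∧ (∃ x y c, w₀ = x ++ y ∧ w₀' = x ++ c :: y) ∧
        f w₀ ≠ f w₀' := by
  intro n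
  induction n with
  | zero =>
    intro u w hn hsub hk hne
    have hlen : w.length ≤ u.length := by omega
    exact absurd (congrArg f (hsub.eq_of_length_le hlen)) hne
  | succ n ih =>
    intro u w hn hsub hk hne
    have hne_uw : u ≠ w := fun he => hne (congrArg f he)
    obtain ⟨x, y, c, e1, e2⟩ := ins hsub hne_uw
    have humid : u <+ x ++ c :: y := by
      rw [e1]
      exact (List.sublist_cons_self c y).append_left x
    have hkmid : kEquiv k u (x ++ c :: y) := sandwich hk humid e2
    by_cases hf : f u = f (x ++ c :: y)
    · have hkmw : kEquiv k (x ++ c :: y) w := kEquiv_trans (kEquiv_symm hkmid) hk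
      have hmidlen : (x ++ c :: y).length = u.length + 1 := by
        rw [e1]
        simp only [List.length_append, List.length_cons]
        omega
      have hwlen := e2.length_le
      have hlen : w.length - (x ++ c :: y).length ≤ n := by omega
      exact ih (x ++ c :: y) w hlen e2 hkmw (by rw [← hf]; exact hne)
    · exact ⟨u, x ++ c :: y, hkmid, ⟨x, y, c, e1, rfl⟩, hf⟩

end SimonAux

/-- Lemma 6 of the paper: if some two `k`-equivalent words lead a minimal DFA to two
different states, then there are such words differing by a single inserted letter. -/
theorem stmt3 {α σ : Type*} [Fintype α] [Fintype σ] (A : DFA α σ)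
    (hmin : IsMinimalDFA A) (k : ℕ) (w1 w2 : List α)
    (h : kEquiv k w1 w2) (hne : A.eval w1 ≠ A.eval w2) :
    ∃ w w' : List α, kEquiv k w w' ∧
      (∃ (u v : List α) (a : α), w = u ++ v ∧ w' = u ++ a :: v) ∧
      A.eval w ≠ A.eval w' := by
  classical
  have h0 : kEquiv k ([] ++ w1) ([] ++ w2) := by simpa using h
  obtain ⟨w, hw1, hw2, hw⟩ := dir (w1.length + w2.length) [] w1 w2 le_rfl h0
  have hww1 : kEquiv k w w1 := by simpa using hw
  by_cases hf : A.eval w1 = A.eval w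
  · have hk2 : kEquiv k w2 w := kEquiv_trans (kEquiv_symm h) (kEquiv_symm hww1)
    have hne2 : A.eval w2 ≠ A.eval w := fun he => hne (hf.trans he.symm)
    exact chain A.eval (w.length - w2.length) w2 w le_rfl hw2 hk2 hne2
  · exact chain A.eval (w.length - w1.length) w1 w le_rfl hw1 (kEquiv_symm hww1) hf
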